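/- Let A, P ∈ ℝ^{n×n}, i, i' ∈ [n], and suppose (a) max_{a,b} |(1/n)(AAᵀ)_{ab} − (1/n)(PPᵀ)_{ab}| ≤ ε, (b) there exist nodes ĩ, ĩ' with P_{ĩ·} = P_{i·} and P_{ĩ'·} = P_{i'·}, and (c) d(i,i') := max_{k≠i,i'} |(1/n)(AAᵀ)_{ik} − (1/n)(AAᵀ)_{i'k}| ≤ 2ε, with ĩ ≠ i,i' and ĩ' ≠ i,i'. Then (1/n)‖P_{i·} − P_{i'·}‖₂² ≤ 8ε. -/

import Mathlib

open Matrix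

/-- Key deterministic step: if (a) all entries of `(1/n)AAᵀ` are within `ε` of those of
`(1/n)PPᵀ`, (b) there are nodes `ĩ ≠ i,i'` and `ĩ' ≠ i,i'` with `P_{ĩ·} = P_{i·}` and
`P_{ĩ'·} = P_{i'·}`, and (c) the observed dissimilarity
`d(i,i') = max_{k≠i,i'} |(1/n)(AAᵀ)_{ik} − (1/n)(AAᵀ)_{i'k}|` is at most `2ε`, then
`(1/n)‖P_{i·} − P_{i'·}‖₂² ≤ 8ε`. -/
theorem row_proximity (n : ℕ) (A P : Matrix (Fin n) (Fin n) ℝ) (i i' : Fin n) (ε : ℝ)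
    (hAP : ∀ a b, |(1 / (n : ℝ)) * (A * Aᵀ) a b - (1 / (n : ℝ)) * (P * Pᵀ) a b| ≤ ε)
    (itil itil' : Fin n)
    (hitil : itil ≠ i ∧ itil ≠ i') (hitil' : itil' ≠ i ∧ itil' ≠ i')
    (hrow : ∀ k, P itil k = P i k) (hrow' : ∀ k, P itil' k = P i' k)
    (hd : ∀ k, k ≠ i → k ≠ i' →
      |(1 / (n : ℝ)) * (A * Aᵀ) i k - (1 / (n : ℝ)) * (A * Aᵀ) i' k| ≤ 2 * ε) :
    (1 / (n : ℝ)) * ∑ j, (P i j - P i' j) ^ 2 ≤ 8 * ε := by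
  set c : ℝ := 1 / (n : ℝ)
  -- Gram identity using duplicated rows
  have hsum : ∑ j, (P i j - P i' j) ^ 2 =
      ((P * Pᵀ) i itil - (P * Pᵀ) i' itil) + ((P * Pᵀ) i' itil' - (P * Pᵀ) i itil') := by
    simp only [mul_apply, transpose_apply, hrow, hrow']
    rw [← Finset.sum_sub_distrib, ← Finset.sum_sub_distrib, ← Finset.sum_add_distrib]
    apply Finset.sum_congr rfl
    intro j _
    ring
  -- bound on P differences via A
  have key : ∀ k : Fin n, k ≠ i → k ≠ i' →
      |c * (P * Pᵀ) i k - c * (P * Pᵀ) i' k| ≤ 4 * ε := by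
    intro k hk hk'
    have h1 := hAP i k
    have h2 := hAP i' k
    have h3 := hd k hk hk'
    calc |c * (P * Pᵀ) i k - c * (P * Pᵀ) i' k|
        = |(c * (P * Pᵀ) i k - c * (A * Aᵀ) i k) + (c * (A * Aᵀ) i k - c * (A * Aᵀ) i' k)
            + (c * (A * Aᵀ) i' k - c * (P * Pᵀ) i' k)| := by ring_nf
      _ ≤ |(c * (P * Pᵀ) i k - c * (A * Aᵀ) i k) + (c * (A * Aᵀ) i k - c * (A * Aᵀ) i' k)|
            + |c * (A * Aᵀ) i' k - c * (P * Pᵀ) i' k| := abs_add_le _ _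
      _ ≤ |c * (P * Pᵀ) i k - c * (A * Aᵀ) i k| + |c * (A * Aᵀ) i k - c * (A * Aᵀ) i' k|
            + |c * (A * Aᵀ) i' k - c * (P * Pᵀ) i' k| := add_le_add_left (abs_add_le _ _) _
      _ ≤ ε + 2 * ε + ε := by
            have h1' : |c * (P * Pᵀ) i k - c * (A * Aᵀ) i k| ≤ ε := by
              rw [abs_sub_comm]; exact h1
            exact add_le_add (add_le_add h1' h3) h2
      _ = 4 * ε := by ring
  have k1 := key itil hitil.1 hitil.2
  have k2 := key itil' hitil'.1 hitil'.2
  have e1 : c * (P * Pᵀ) i itil - c * (P * Pᵀ) i' itil ≤ 4 * ε :=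
    le_trans (le_abs_self _) k1
  have e2 : c * (P * Pᵀ) i' itil' - c * (P * Pᵀ) i itil' ≤ 4 * ε := by
    rw [abs_sub_comm] at k2
    exact le_trans (le_abs_self _) k2
  calc c * ∑ j, (P i j - P i' j) ^ 2
      = (c * (P * Pᵀ) i itil - c * (P * Pᵀ) i' itil)
        + (c * (P * Pᵀ) i' itil' - c * (P * Pᵀ) i itil') := by rw [hsum]; ring
    _ ≤ 4 * ε + 4 * ε := add_le_add e1 e2
    _ = 8 * ε := by ring
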